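/- Let C be a triangulated category with shift functor Σ and X a cluster tilting object of C. Then for every object C' of C there exists a triangle X₁ → X₀ → C' → ΣX₁ with X₀, X₁ in add X. -/

import Mathlib

open CategoryTheory CategoryTheory.Limits CategoryTheory.Pretriangulated

/-- `Y` belongs to `add X`: it is a direct summand of a finite direct sum of copies
of `X`. -/
def InAdd {C : Type} [Category C] [Preadditive C] [HasFiniteBiproducts C]
    (X Y : C) : Prop :=
  ∃ (m : ℕ) (i : Y ⟶ ⨁ fun _ : Fin m => X) (r : (⨁ fun _ : Fin m => X) ⟶ Y),
    i ≫ r = 𝟙 Y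

/-- `add X` is contravariantly finite: every object has a right `add X`-approximation. -/
def ContravariantlyFiniteAdd {C : Type} [Category C] [Preadditive C]
    [HasFiniteBiproducts C] (X : C) : Prop :=
  ∀ M : C, ∃ (X' : C) (_ : InAdd X X') (f : X' ⟶ M),
    ∀ (X'' : C), InAdd X X'' → ∀ g : X'' ⟶ M, ∃ h : X'' ⟶ X', h ≫ f = g

/-- `add X` is covariantly finite: every object has a left `add X`-approximation. -/
def CovariantlyFiniteAdd {C : Type} [Category C] [Preadditive C]
    [HasFiniteBiproducts C] (X : C) : Prop :=
  ∀ M : C, ∃ (X' : C) (_ : InAdd X X') (f : M ⟶ X'),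
    ∀ (X'' : C), InAdd X X'' → ∀ g : M ⟶ X'', ∃ h : X' ⟶ X'', f ≫ h = g

/-- `X` is a cluster tilting object of the triangulated category `C`. -/
structure IsClusterTilting {C : Type} [Category C] [Preadditive C] [HasZeroObject C]
    [HasShift C ℤ] [∀ n : ℤ, (shiftFunctor C n).Additive] [Pretriangulated C]
    [HasFiniteBiproducts C] (X : C) : Prop where
  contravariantlyFinite : ContravariantlyFiniteAdd X
  covariantlyFinite : CovariantlyFiniteAdd X
  mem_iff_hom_shift_vanish :
    ∀ Y : C, InAdd X Y ↔ ∀ (Z : C), InAdd X Z → ∀ f : Y ⟶ Z⟦(1 : ℤ)⟧, f = 0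
  mem_iff_vanish_hom_shift :
    ∀ Y : C, InAdd X Y ↔ ∀ (Z : C), InAdd X Z → ∀ f : Z ⟶ Y⟦(1 : ℤ)⟧, f = 0

/-- Let C be a triangulated category with shift functor Σ and X a cluster tilting
object of C. Then for every object C' of C there exists a triangle
X₁ → X₀ → C' → ΣX₁ with X₀, X₁ in add X. -/
theorem stmt_4 {C : Type} [Category C] [Preadditive C] [HasZeroObject C]
    [HasShift C ℤ] [∀ n : ℤ, (shiftFunctor C n).Additive] [Pretriangulated C]
    [HasFiniteBiproducts C] (X : C) (hX : IsClusterTilting X) (C' : C) :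
    ∃ (X₁ X₀ : C) (_ : InAdd X X₁) (_ : InAdd X X₀)
      (f : X₁ ⟶ X₀) (g : X₀ ⟶ C') (h : C' ⟶ X₁⟦(1 : ℤ)⟧),
      Triangle.mk f g h ∈ distTriang C := by
  obtain ⟨X₀, hX₀, g, hg⟩ := hX.contravariantlyFinite C'
  obtain ⟨Y, h, k, hT⟩ := Pretriangulated.distinguished_cocone_triangle g
  have hT' := inv_rot_of_distTriang _ hT
  -- X₁ := Y⟦-1⟧ is in add X
  have hX₁ : InAdd X ((Y : C)⟦(-1 : ℤ)⟧) := by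
    rw [hX.mem_iff_vanish_hom_shift]
    intro W hW u
    set e : ((Y : C)⟦(-1 : ℤ)⟧)⟦(1 : ℤ)⟧ ≅ Y := (shiftEquiv C (1 : ℤ)).counitIso.app Y
    have hu' : (u ≫ e.hom) ≫ k = 0 :=
      (hX.mem_iff_hom_shift_vanish W).mp hW X₀ hX₀ _
    obtain ⟨v, hv⟩ := Triangle.coyoneda_exact₃ _ hT (u ≫ e.hom) hu'
    obtain ⟨w, hw⟩ := hg W hW v
    have : u ≫ e.hom = 0 := by
      rw [show u ≫ e.hom = @CategoryStruct.comp _ _ W C' Y v h from hv, ← hw, Category.assoc]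
      have := comp_distTriang_mor_zero₁₂ _ hT
      change g ≫ h = 0 at this
      rw [this, comp_zero]
    have := this =≫ e.inv
    simpa using this
  exact ⟨_, X₀, hX₁, hX₀, _, _, _, hT'⟩
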